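/- Let G = (E, V) be a locally finite weighted graph and let 𝒱 : V → ℝ be a potential that is bounded from below. Then the Schrödinger operator Δ_{G,∘} + 𝒱 is essentially self-adjoint on C_c(G), i.e., its closure Δ_G + 𝒱 is self-adjoint. -/

import Mathlib

/- Common setup: ℓ²(V), the subspace of finitely supported functions,
   and essential self-adjointness for `LinearPMap`s. -/

noncomputable section

open scoped ENNReal

/-- The Hilbert space ℓ²(V) with complex coefficients. -/
abbrev l2 (V : Type*) := lp (fun _ : V => ℂ) 2

/-- The dense subspace `C_c(G)` of finitely supported functions in ℓ²(V). -/
def Cc (V : Type*) : Submodule ℂ (l2 V) where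
  carrier := {f | (Function.support (⇑f : V → ℂ)).Finite}
  add_mem' := by
    intro f g hf hg
    exact ((hf.union hg).subset (by rw [lp.coeFn_add]; exact Function.support_add _ _))
  zero_mem' := by
    have h0 : (Function.support (⇑(0 : l2 V) : V → ℂ)) = ∅ := by
      ext x; exact ⟨fun h => (Function.mem_support.mp h) (by rw [lp.coeFn_zero]; rfl), fun h => h.elim⟩
    simp only [Set.mem_setOf_eq, h0, Set.finite_empty]
  smul_mem' := by
    intro c f hf
    refine hf.subset ?_
    intro x hx
    simp only [Function.mem_support, lp.coeFn_smul, Pi.smul_apply, smul_eq_mul] at hx ⊢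
    intro h0
    exact hx (by rw [h0, mul_zero])

/-- A densely defined operator is essentially self-adjoint if it is closable
and its closure is self-adjoint. -/
def IsEssentiallySelfAdjoint {H : Type*} [NormedAddCommGroup H] [InnerProductSpace ℂ H]
    [CompleteSpace H] (T : H →ₗ.[ℂ] H) : Prop :=
  T.IsClosable ∧ IsSelfAdjoint T.closure


open scoped InnerProductSpace ComplexConjugate

section Aux

/-- Inner product against a finitely-supported element as a finite sum. -/
private lemma inner_eq_sum {V : Type*} (w g : l2 V) (s : Finset V)
    (h : ∀ x, g x ≠ 0 → x ∈ s) :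
    ⟪w, g⟫_ℂ = ∑ x ∈ s, conj (w x) * g x := by
  rw [lp.inner_eq_tsum]
  simp_rw [RCLike.inner_apply, mul_comm (g _)]
  exact tsum_eq_sum (fun x hx => by
    have : g x = 0 := by by_contra hg; exact hx (h x hg)
    simp [RCLike.inner_apply, this])

/-- Discrete maximum principle. -/
private lemma max_principle {V : Type*} (u : l2 V) (N : V → Finset V) (a : V → ℝ)
    (e : V → V → ℝ)
    (he : ∀ x y, 0 ≤ e x y) (ha : ∀ x, 1 ≤ a x)
    (heq : ∀ x, ((∑ y ∈ N x, (e x y : ℂ)) + (a x : ℂ)) * u x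
      - ∑ y ∈ N x, (e x y : ℂ) * u y = 0) :
    u = 0 := by
  by_contra hu
  rw [lp.eq_zero_iff_coeFn_eq_zero] at hu
  have ⟨w, hw⟩ : ∃ w, u w ≠ 0 := by
    by_contra h
    push_neg at h
    exact hu (funext h)
  have hsum : Summable (fun x => ‖u x‖ ^ (2:ℝ)) := by
    have := lp.hasSum_norm (p := 2) (E := fun _ : V => ℂ) (by norm_num) u
    simpa using this.summable
  have hfin : {x | ‖u w‖ ≤ ‖u x‖}.Finite := by
    have hε : (0:ℝ) < ‖u w‖ ^ (2:ℝ) :=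
      Real.rpow_pos_of_pos (norm_pos_iff.mpr hw) 2
    have h2 := hsum.tendsto_cofinite_zero.eventually_lt_const hε
    rw [Filter.eventually_cofinite] at h2
    refine h2.subset (fun x hx => ?_)
    simp only [Set.mem_setOf_eq, not_lt] at hx ⊢
    exact Real.rpow_le_rpow (norm_nonneg _) hx (by norm_num)
  have hne : (hfin.toFinset).Nonempty := ⟨w, by simp⟩
  obtain ⟨x0, hx0mem, hx0max⟩ := Finset.exists_max_image hfin.toFinset (fun x => ‖u x‖) hne
  have hx0w : ‖u w‖ ≤ ‖u x0‖ := by simpa using hx0mem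
  have hmax : ∀ x, ‖u x‖ ≤ ‖u x0‖ := by
    intro x
    by_cases hx : x ∈ hfin.toFinset
    · exact hx0max x hx
    · simp only [Set.Finite.mem_toFinset, Set.mem_setOf_eq, not_le] at hx
      exact le_trans hx.le hx0w
  have hx0pos : 0 < ‖u x0‖ := lt_of_lt_of_le (norm_pos_iff.mpr hw) hx0w
  have h0 := congrArg (fun z => (conj (u x0) * z).re) (heq x0)
  simp only [mul_zero, Complex.zero_re, mul_sub] at h0
  rw [Complex.sub_re] at h0
  have hre1 : (conj (u x0) * (((∑ y ∈ N x0, (e x0 y : ℂ)) + (a x0 : ℂ)) * u x0)).re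
      = ((∑ y ∈ N x0, e x0 y) + a x0) * Complex.normSq (u x0) := by
    have hnsq : ((Complex.normSq (u x0) : ℝ) : ℂ) = conj (u x0) * u x0 := by
      rw [← Complex.mul_conj]; ring
    have h1 : conj (u x0) * (((∑ y ∈ N x0, (e x0 y : ℂ)) + (a x0 : ℂ)) * u x0)
        = ((((∑ y ∈ N x0, e x0 y) + a x0) * Complex.normSq (u x0) : ℝ) : ℂ) := by
      push_cast [hnsq]
      ring
    rw [h1, Complex.ofReal_re]
  have hre2 : (conj (u x0) * (∑ y ∈ N x0, (e x0 y : ℂ) * u y)).re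
      ≤ (∑ y ∈ N x0, e x0 y) * Complex.normSq (u x0) := by
    rw [Finset.mul_sum, Complex.re_sum, Finset.sum_mul]
    refine Finset.sum_le_sum (fun y _ => ?_)
    have : (conj (u x0) * ((e x0 y : ℂ) * u y)).re = e x0 y * (conj (u x0) * u y).re := by
      rw [show conj (u x0) * ((e x0 y : ℂ) * u y) = (e x0 y : ℂ) * (conj (u x0) * u y) by ring]
      simp [Complex.mul_re]
    rw [this]
    refine mul_le_mul_of_nonneg_left ?_ (he x0 y)
    calc (conj (u x0) * u y).re ≤ ‖conj (u x0) * u y‖ := Complex.re_le_norm _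
      _ = ‖u x0‖ * ‖u y‖ := by rw [norm_mul, RCLike.norm_conj]
      _ ≤ ‖u x0‖ * ‖u x0‖ := by
          exact mul_le_mul_of_nonneg_left (hmax y) (norm_nonneg _)
      _ = Complex.normSq (u x0) := by
          rw [← Complex.sq_norm, sq]
  have h4 : 0 < Complex.normSq (u x0) := Complex.normSq_pos.mpr (norm_pos_iff.mp hx0pos)
  nlinarith [ha x0, h4, hre2, hre1, h0]

set_option maxHeartbeats 1000000 in
open RCLike in
private theorem esa_criterion {H : Type*} [NormedAddCommGroup H] [InnerProductSpace ℂ H]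
    [CompleteSpace H] (T : H →ₗ.[ℂ] H) (hdense : Dense (T.domain : Set H))
    (hsym : ∀ (f g : T.domain), ⟪T f, (g:H)⟫_ℂ = ⟪(f:H), T g⟫_ℂ)
    (t : ℝ)
    (hbound : ∀ f : T.domain, ‖(f:H)‖^2 ≤ RCLike.re ⟪(f:H), T f⟫_ℂ + t * ‖(f:H)‖^2)
    (hker : ∀ u : H, (∀ f : T.domain, ⟪u, T f⟫_ℂ + (t:ℂ) * ⟪u, (f:H)⟫_ℂ = 0) → u = 0) :
    T.IsClosable ∧ IsSelfAdjoint T.closure := by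
  classical
  -- closability
  have hgraph_sub : ∀ (C : Set (H × H)), IsClosed C → (∀ f : T.domain, ((f:H), T f) ∈ C) →
      closure (T.graph : Set (H × H)) ⊆ C := by
    intro C hC hf
    refine closure_minimal ?_ hC
    rintro ⟨a, b⟩ hab
    rw [SetLike.mem_coe, LinearPMap.mem_graph_iff] at hab
    obtain ⟨x, hx1, hx2⟩ := hab
    subst hx1; subst hx2
    exact hf x
  have hclosable : T.IsClosable := by
    refine ⟨(T.graph.topologicalClosure).toLinearPMap, (Submodule.toLinearPMap_graph_eq _ ?_).symm⟩
    rintro ⟨a, b⟩ hab (rfl : a = 0)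
    have key : ∀ f : T.domain, ⟪b, (f : H)⟫_ℂ = 0 := by
      intro f
      have hC : IsClosed {q : H × H | ⟪q.2, (f:H)⟫_ℂ = ⟪q.1, T f⟫_ℂ} := by
        apply isClosed_eq
        · exact (continuous_snd.inner continuous_const)
        · exact (continuous_fst.inner continuous_const)
      have := hgraph_sub _ hC (fun x => hsym x f) hab
      simpa using this
    exact hdense.eq_zero_of_inner_left ℂ (fun v hv => key ⟨v, hv⟩)
  set A := T.closure with hA
  have hAgraph : (A.graph : Set (H × H)) = closure (T.graph : Set (H × H)) := by
    rw [← hclosable.graph_closure_eq_closure_graph]; rfl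
  have htrick : ∀ (C : Set (H × H)), IsClosed C → (∀ f : T.domain, ((f:H), T f) ∈ C) →
      ∀ g : A.domain, (((g:H), A g) ∈ C) := by
    intro C hC hf g
    have := A.mem_graph g
    have h2 : ((g:H), A g) ∈ (A.graph : Set (H × H)) := this
    rw [hAgraph] at h2
    exact hgraph_sub C hC hf h2
  have hTA : T ≤ A := T.le_closure
  have hdenseA : Dense (A.domain : Set H) :=
    hdense.mono (by exact_mod_cast hTA.1)
  -- symmetry of the closure
  have hAsym1 : ∀ (g : A.domain) (f : T.domain), ⟪A g, (f:H)⟫_ℂ = ⟪(g:H), T f⟫_ℂ := by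
    intro g f
    have hC : IsClosed {q : H × H | ⟪q.2, (f:H)⟫_ℂ = ⟪q.1, T f⟫_ℂ} :=
      isClosed_eq (continuous_snd.inner continuous_const) (continuous_fst.inner continuous_const)
    exact htrick _ hC (fun x => hsym x f) g
  have hAsym : ∀ (g₁ g₂ : A.domain), ⟪A g₁, (g₂:H)⟫_ℂ = ⟪(g₁:H), A g₂⟫_ℂ := by
    intro g₁ g₂
    have hC : IsClosed {q : H × H | ⟪q.2, (g₂:H)⟫_ℂ = ⟪q.1, A g₂⟫_ℂ} :=
      isClosed_eq (continuous_snd.inner continuous_const) (continuous_fst.inner continuous_const)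
    have hf : ∀ f : T.domain, ⟪T f, (g₂:H)⟫_ℂ = ⟪(f:H), A g₂⟫_ℂ := by
      intro f
      calc ⟪T f, (g₂:H)⟫_ℂ = conj ⟪(g₂:H), T f⟫_ℂ := (inner_conj_symm _ _).symm
        _ = conj ⟪A g₂, (f:H)⟫_ℂ := by rw [hAsym1 g₂ f]
        _ = ⟪(f:H), A g₂⟫_ℂ := inner_conj_symm _ _
    exact htrick _ hC hf g₁
  -- bound for the closure
  have hAbound : ∀ g : A.domain, ‖(g:H)‖^2 ≤ re ⟪(g:H), A g⟫_ℂ + t * ‖(g:H)‖^2 := by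
    intro g
    have hC : IsClosed {q : H × H | ‖q.1‖^2 ≤ re ⟪q.1, q.2⟫_ℂ + t * ‖q.1‖^2} := by
      apply isClosed_le
      · exact (continuous_fst.norm.pow 2)
      · exact ((RCLike.continuous_re.comp (continuous_fst.inner continuous_snd)).add
          (continuous_const.mul (continuous_fst.norm.pow 2)))
    exact htrick _ hC hbound g
  -- lower bound on the shifted operator
  have hlower : ∀ g : A.domain, ‖(g:H)‖ ≤ ‖A g + (t:ℂ) • (g:H)‖ := by
    intro g
    have h1 : ‖(g:H)‖^2 ≤ re ⟪(g:H), A g + (t:ℂ) • (g:H)⟫_ℂ := by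
      rw [inner_add_right, inner_smul_right, map_add]
      have h3 : re ((t:ℂ) * ⟪(g:H), (g:H)⟫_ℂ) = t * ‖(g:H)‖^2 := by
        rw [RCLike.re_to_complex, Complex.mul_re]
        simp only [Complex.ofReal_re, Complex.ofReal_im, zero_mul, sub_zero]
        congr 1
        rw [← RCLike.re_to_complex, inner_self_eq_norm_sq]
      rw [h3]
      exact hAbound g
    have h2 : re ⟪(g:H), A g + (t:ℂ) • (g:H)⟫_ℂ ≤ ‖(g:H)‖ * ‖A g + (t:ℂ) • (g:H)‖ :=
      re_inner_le_norm _ _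
    nlinarith [norm_nonneg (g:H), norm_nonneg (A g + (t:ℂ) • (g:H))]
  -- the range of A + t
  set B : A.domain →ₗ[ℂ] H := A.toFun + (t:ℂ) • A.domain.subtype with hB
  have hBapp : ∀ g : A.domain, B g = A g + (t:ℂ) • (g:H) := fun g => rfl
  set R : Submodule ℂ H := LinearMap.range B with hR
  have hRclosed : IsClosed (R : Set H) := by
    apply IsSeqClosed.isClosed
    intro u y hu huy
    choose g hg using fun n => hu n
    have hcu : CauchySeq u := huy.cauchySeq
    have hgc : CauchySeq (fun n => ((g n : H))) := by
      rw [Metric.cauchySeq_iff] at hcu ⊢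
      intro ε hε
      obtain ⟨N, hN⟩ := hcu ε hε
      refine ⟨N, fun m hm n hn => ?_⟩
      have := hlower (g m - g n)
      have hBd : B (g m - g n) = u m - u n := by rw [map_sub, hg, hg]
      have hco : ((g m - g n : A.domain) : H) = (g m : H) - (g n : H) := rfl
      rw [dist_eq_norm]
      calc ‖(g m : H) - (g n : H)‖ ≤ ‖B (g m - g n)‖ := by
            rw [hBapp, ← hco]; exact this
        _ = ‖u m - u n‖ := by rw [hBd]
        _ < ε := by rw [← dist_eq_norm]; exact hN m hm n hn
    obtain ⟨x, hx⟩ := cauchySeq_tendsto_of_complete hgc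
    have hAg : Filter.Tendsto (fun n => A (g n)) Filter.atTop (nhds (y - (t:ℂ) • x)) := by
      have : ∀ n, A (g n) = u n - (t:ℂ) • ((g n : H)) := by
        intro n
        have := hg n
        rw [hBapp] at this
        rw [← this]; abel
      simp_rw [this]
      exact huy.sub ((hx.const_smul _))
    have hpair : Filter.Tendsto (fun n => (((g n : H)), A (g n))) Filter.atTop
        (nhds (x, y - (t:ℂ) • x)) := hx.prodMk_nhds hAg
    have hclosed : IsClosed (A.graph : Set (H × H)) := hclosable.closure_isClosed
    have hmem : (x, y - (t:ℂ) • x) ∈ (A.graph : Set (H × H)) :=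
      hclosed.mem_of_tendsto hpair (Filter.Eventually.of_forall (fun n => A.mem_graph (g n)))
    rw [SetLike.mem_coe, LinearPMap.mem_graph_iff] at hmem
    obtain ⟨x', hx1, hx2⟩ := hmem
    refine ⟨x', ?_⟩
    rw [hBapp, hx2, hx1, sub_add_cancel]
  have hRperp : Rᗮ = ⊥ := by
    rw [Submodule.eq_bot_iff]
    intro u hu
    apply hker
    intro f
    have hf' : (f : H) ∈ A.domain := hTA.1 f.2
    set f' : A.domain := ⟨(f:H), hf'⟩ with hf'def
    have hTf : T f = A f' := hTA.2 rfl
    have hv : B f' ∈ R := ⟨f', rfl⟩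
    have h0 : ⟪B f', u⟫_ℂ = 0 := (Submodule.mem_orthogonal R u).mp hu _ hv
    have h0' : ⟪u, B f'⟫_ℂ = 0 := by rw [← inner_conj_symm, h0, map_zero]
    rw [hBapp, inner_add_right, inner_smul_right] at h0'
    rw [hTf]
    convert h0' using 2
  have : CompleteSpace R := hRclosed.completeSpace_coe
  have hRtop : R = ⊤ := Submodule.orthogonal_eq_bot_iff.mp hRperp
  -- self-adjointness
  have hle1 : A ≤ A.adjoint := LinearPMap.IsFormalAdjoint.le_adjoint hdenseA hAsym
  have hle2 : A.adjoint ≤ A := by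
    have key : ∀ u : A.adjoint.domain, ∃ g : A.domain, (u : H) = g ∧ A.adjoint u = A g := by
      intro u
      set w : H := A.adjoint u with hw
      have hv : w + (t:ℂ) • (u:H) ∈ R := hRtop ▸ Submodule.mem_top
      obtain ⟨g, hgB⟩ := hv
      have hug : (u:H) - (g:H) = 0 := by
        apply hker
        intro f
        have hf' : (f : H) ∈ A.domain := hTA.1 f.2
        set f' : A.domain := ⟨(f:H), hf'⟩ with hf'def
        have hTf : T f = A f' := hTA.2 rfl
        have h1 : ⟪(u:H), A f'⟫_ℂ = ⟪w, (f:H)⟫_ℂ := by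
          have := LinearPMap.adjoint_isFormalAdjoint (T := A) hdenseA u f'
          exact this.symm
        have h2 : ⟪(g:H), A f'⟫_ℂ = ⟪A g, (f:H)⟫_ℂ := (hAsym g f').symm
        rw [hTf, inner_sub_left, inner_sub_left, h1, h2]
        have hBg : A g + (t:ℂ) • (g:H) = w + (t:ℂ) • (u:H) := (hBapp g).symm.trans hgB
        have : ⟪A g, (f:H)⟫_ℂ = ⟪w, (f:H)⟫_ℂ + (t:ℂ) * ⟪(u:H), (f:H)⟫_ℂ
            - (t:ℂ) * ⟪(g:H), (f:H)⟫_ℂ := by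
          have := congrArg (fun z => ⟪z, (f:H)⟫_ℂ) hBg
          simp only [inner_add_left, inner_smul_left] at this
          have hconj : (starRingEnd ℂ) ((t:ℝ):ℂ) = ((t:ℝ):ℂ) := Complex.conj_ofReal t
          rw [hconj] at this
          linear_combination this
        rw [this]
        ring
      have hug' : (u : H) = (g : H) := sub_eq_zero.mp hug
      refine ⟨g, hug', ?_⟩
      have hBg : A g + (t:ℂ) • (g:H) = w + (t:ℂ) • (u:H) := (hBapp g).symm.trans hgB
      rw [hug'] at hBg
      have h5 : A g = w := add_right_cancel hBg
      exact h5.symm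
    constructor
    · intro x hx
      obtain ⟨g, hg1, _⟩ := key ⟨x, hx⟩
      have hg1' : x = (g : H) := hg1
      rw [hg1']; exact g.2
    · intro x y hxy
      obtain ⟨g, hg1, hg2⟩ := key x
      rw [hg2]
      congr 1
      exact Subtype.ext (by rw [← hxy, hg1])
  have : A.adjoint = A := le_antisymm hle2 hle1
  exact ⟨hclosable, LinearPMap.isSelfAdjoint_def.mpr this⟩

end Aux

theorem stmt0 {V : Type*} [Countable V] (E : V → V → ℝ)
    (hEsymm : ∀ x y, E x y = E y x) (hEpos : ∀ x y, 0 ≤ E x y)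
    (hEloop : ∀ x, E x x = 0)
    (hlocfin : ∀ x, {y | E x y ≠ 0}.Finite)
    (𝒱 : V → ℝ) (h𝒱 : ∃ c : ℝ, ∀ x, c ≤ 𝒱 x)
    (H : l2 V →ₗ.[ℂ] l2 V) (hdom : H.domain = Cc V)
    (hH : ∀ f : H.domain, ∀ x : V,
      H f x = (∑ᶠ y, (E x y : ℂ) * ((f : l2 V) x - (f : l2 V) y)) + 𝒱 x * (f : l2 V) x) :
    IsEssentiallySelfAdjoint H := by
  classical
  obtain ⟨c, hc⟩ := h𝒱
  set t : ℝ := 1 - c with ht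
  have hVt : ∀ x, 1 ≤ 𝒱 x + t := fun x => by rw [ht]; linarith [hc x]
  set N : V → Finset V := fun x => (hlocfin x).toFinset with hNdef
  have hN : ∀ x y, y ∈ N x ↔ E x y ≠ 0 := fun x y => Set.Finite.mem_toFinset _
  -- finite support of domain elements
  have hfin : ∀ f : H.domain, (Function.support (⇑(f : l2 V) : V → ℂ)).Finite := by
    intro f
    have h2 : (f : l2 V) ∈ Cc V := by rw [← hdom]; exact f.2
    exact h2
  -- pointwise formula with finite sums
  have hval : ∀ (f : H.domain) (x : V), (H f : l2 V) x
      = (∑ y ∈ N x, (E x y : ℂ) * ((f : l2 V) x - (f : l2 V) y)) + (𝒱 x : ℂ) * (f : l2 V) x := by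
    intro f x
    rw [hH f x]
    congr 1
    refine finsum_eq_finset_sum_of_support_subset _ (fun y hy => ?_)
    rw [Function.mem_support] at hy
    rw [Finset.mem_coe, hN]
    intro hE
    exact hy (by rw [hE]; simp)
  -- support structure of H f
  have hsupp : ∀ (f : H.domain) (x : V), (H f : l2 V) x ≠ 0 →
      ((f : l2 V) x ≠ 0 ∨ ∃ y, E x y ≠ 0 ∧ (f : l2 V) y ≠ 0) := by
    intro f x hx
    by_contra hcon
    push_neg at hcon
    obtain ⟨hfx, hall⟩ := hcon
    apply hx
    rw [hval]
    rw [Finset.sum_eq_zero, hfx, mul_zero, add_zero]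
    intro y hy
    rw [hN] at hy
    rw [hall y hy, hfx]
    simp
  -- expansion of the sesquilinear form over a sufficiently large finite set
  have hexp : ∀ (f g : H.domain) (s : Finset V),
      (∀ x, (f : l2 V) x ≠ 0 → x ∈ s) → (∀ x, (g : l2 V) x ≠ 0 → x ∈ s) →
      (∀ x, (f : l2 V) x ≠ 0 → N x ⊆ s) → (∀ x, (g : l2 V) x ≠ 0 → N x ⊆ s) →
      ⟪(f : l2 V), (H g : l2 V)⟫_ℂ =
        (∑ x ∈ s, ∑ y ∈ s, (E x y : ℂ) * (conj ((f : l2 V) x) * ((g : l2 V) x - (g : l2 V) y)))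
        + ∑ x ∈ s, (𝒱 x : ℂ) * (conj ((f : l2 V) x) * (g : l2 V) x) := by
    intro f g s hfs hgs hNf hNg
    have hsupps : ∀ x, (H g : l2 V) x ≠ 0 → x ∈ s := by
      intro x hx
      rcases hsupp g x hx with h | ⟨y, hEy, hgy⟩
      · exact hgs x h
      · refine hNg y hgy ?_
        rw [hN]
        rw [hEsymm]
        exact hEy
    rw [inner_eq_sum _ _ s hsupps]
    have hterm : ∀ x ∈ s, conj ((f : l2 V) x) * (H g : l2 V) x
        = (∑ y ∈ s, (E x y : ℂ) * (conj ((f : l2 V) x) * ((g : l2 V) x - (g : l2 V) y)))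
          + (𝒱 x : ℂ) * (conj ((f : l2 V) x) * (g : l2 V) x) := by
      intro x _
      rw [hval g x, mul_add]
      congr 1
      · by_cases hfx : (f : l2 V) x = 0
        · simp [hfx]
        · rw [Finset.mul_sum]
          calc ∑ y ∈ N x, conj ((f : l2 V) x) * ((E x y : ℂ) * ((g : l2 V) x - (g : l2 V) y))
              = ∑ y ∈ N x, (E x y : ℂ) * (conj ((f : l2 V) x) * ((g : l2 V) x - (g : l2 V) y)) :=
                Finset.sum_congr rfl (fun y _ => by ring)
            _ = ∑ y ∈ s, (E x y : ℂ) * (conj ((f : l2 V) x) * ((g : l2 V) x - (g : l2 V) y)) := by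
                refine Finset.sum_subset (hNf x hfx) (fun y _ hyn => ?_)
                have hE0 : E x y = 0 := by
                  by_contra hE
                  exact hyn ((hN x y).mpr hE)
                rw [hE0]
                simp
      · ring
    rw [Finset.sum_congr rfl hterm, Finset.sum_add_distrib]
  -- swapping the summation indices using the symmetry of E
  have hswap : ∀ (s : Finset V) (a b : V → ℂ),
      ∑ x ∈ s, ∑ y ∈ s, (E x y : ℂ) * (a x * b y)
        = ∑ x ∈ s, ∑ y ∈ s, (E x y : ℂ) * (a y * b x) := by
    intro s a b
    rw [Finset.sum_comm]
    exact Finset.sum_congr rfl (fun x _ => Finset.sum_congr rfl (fun y _ => by rw [hEsymm]))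
  -- the common finite set for a pair of domain elements
  have hbig : ∀ f g : H.domain, ∃ s : Finset V,
      (∀ x, (f : l2 V) x ≠ 0 → x ∈ s) ∧ (∀ x, (g : l2 V) x ≠ 0 → x ∈ s) ∧
      (∀ x, (f : l2 V) x ≠ 0 → N x ⊆ s) ∧ (∀ x, (g : l2 V) x ≠ 0 → N x ⊆ s) := by
    intro f g
    set sf := (hfin f).toFinset
    set sg := (hfin g).toFinset
    refine ⟨sf ∪ sg ∪ (sf ∪ sg).biUnion N, ?_, ?_, ?_, ?_⟩
    · intro x hx
      exact Finset.mem_union_left _ (Finset.mem_union_left _ ((hfin f).mem_toFinset.mpr hx))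
    · intro x hx
      exact Finset.mem_union_left _ (Finset.mem_union_right _ ((hfin g).mem_toFinset.mpr hx))
    · intro x hx y hy
      refine Finset.mem_union_right _ (Finset.mem_biUnion.mpr ?_)
      exact ⟨x, Finset.mem_union_left _ ((hfin f).mem_toFinset.mpr hx), hy⟩
    · intro x hx y hy
      refine Finset.mem_union_right _ (Finset.mem_biUnion.mpr ?_)
      exact ⟨x, Finset.mem_union_right _ ((hfin g).mem_toFinset.mpr hx), hy⟩
  -- symmetry
  have hsym : ∀ f g : H.domain, ⟪(H f : l2 V), (g : l2 V)⟫_ℂ = ⟪(f : l2 V), (H g : l2 V)⟫_ℂ := by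
    intro f g
    obtain ⟨s, hfs, hgs, hNf, hNg⟩ := hbig f g
    have h1 := hexp g f s hgs hfs hNg hNf
    have h2 := hexp f g s hfs hgs hNf hNg
    rw [h2]
    calc ⟪(H f : l2 V), (g : l2 V)⟫_ℂ = conj ⟪(g : l2 V), (H f : l2 V)⟫_ℂ :=
          (inner_conj_symm _ _).symm
      _ = (∑ x ∈ s, ∑ y ∈ s, (E x y : ℂ) * ((g : l2 V) x * (conj ((f : l2 V) x) - conj ((f : l2 V) y))))
          + ∑ x ∈ s, (𝒱 x : ℂ) * ((g : l2 V) x * conj ((f : l2 V) x)) := by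
          rw [h1]
          rw [map_add, map_sum, map_sum]
          congr 1
          · refine Finset.sum_congr rfl (fun x _ => ?_)
            rw [map_sum]
            refine Finset.sum_congr rfl (fun y _ => ?_)
            simp only [map_mul, map_sub, Complex.conj_ofReal, Complex.conj_conj]
          · refine Finset.sum_congr rfl (fun x _ => ?_)
            simp only [map_mul, Complex.conj_ofReal, Complex.conj_conj]
      _ = (∑ x ∈ s, ∑ y ∈ s, (E x y : ℂ) * (conj ((f : l2 V) x) * ((g : l2 V) x - (g : l2 V) y)))
          + ∑ x ∈ s, (𝒱 x : ℂ) * (conj ((f : l2 V) x) * (g : l2 V) x) := by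
          congr 1
          · have e1 : ∑ x ∈ s, ∑ y ∈ s, (E x y : ℂ) * ((g : l2 V) x * (conj ((f : l2 V) x) - conj ((f : l2 V) y)))
                = (∑ x ∈ s, ∑ y ∈ s, (E x y : ℂ) * ((g : l2 V) x * conj ((f : l2 V) x)))
                  - ∑ x ∈ s, ∑ y ∈ s, (E x y : ℂ) * (conj ((f : l2 V) y) * (g : l2 V) x) := by
              rw [← Finset.sum_sub_distrib]
              refine Finset.sum_congr rfl (fun x _ => ?_)
              rw [← Finset.sum_sub_distrib]
              exact Finset.sum_congr rfl (fun y _ => by ring)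
            have e2 : ∑ x ∈ s, ∑ y ∈ s, (E x y : ℂ) * (conj ((f : l2 V) x) * ((g : l2 V) x - (g : l2 V) y))
                = (∑ x ∈ s, ∑ y ∈ s, (E x y : ℂ) * ((g : l2 V) x * conj ((f : l2 V) x)))
                  - ∑ x ∈ s, ∑ y ∈ s, (E x y : ℂ) * (conj ((f : l2 V) x) * (g : l2 V) y) := by
              rw [← Finset.sum_sub_distrib]
              refine Finset.sum_congr rfl (fun x _ => ?_)
              rw [← Finset.sum_sub_distrib]
              exact Finset.sum_congr rfl (fun y _ => by ring)
            rw [e1, e2, hswap s (fun x => conj ((f : l2 V) x)) (fun x => (g : l2 V) x)]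
          · exact Finset.sum_congr rfl (fun x _ => by ring)
  -- helper facts about real parts
  have hre0 : ∀ (r : ℝ) (z : ℂ), ((r : ℂ) * z).re = r * z.re := by
    intro r z; simp [Complex.mul_re]
  have hcz : ∀ z : ℂ, (conj z * z).re = Complex.normSq z := by
    intro z; rw [mul_comm, Complex.mul_conj, Complex.ofReal_re]
  have hsub : ∀ a b : ℂ, Complex.normSq (a - b)
      = Complex.normSq a + Complex.normSq b - 2 * (conj a * b).re := by
    intro a b
    simp only [Complex.normSq_apply, Complex.mul_re, Complex.sub_re, Complex.sub_im,
      Complex.conj_re, Complex.conj_im]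
    ring
  -- norm squared as a finite sum
  have hnormsq : ∀ (f : H.domain) (s : Finset V), (∀ x, (f : l2 V) x ≠ 0 → x ∈ s) →
      ‖(f : l2 V)‖^2 = ∑ x ∈ s, Complex.normSq ((f : l2 V) x) := by
    intro f s hfs
    rw [← inner_self_eq_norm_sq (𝕜 := ℂ) ((f : l2 V) : l2 V)]
    rw [inner_eq_sum _ _ s hfs, RCLike.re_to_complex, Complex.re_sum]
    exact Finset.sum_congr rfl (fun x _ => hcz _)
  -- lower bound for the quadratic form
  have hbound : ∀ f : H.domain, ‖(f : l2 V)‖^2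
      ≤ RCLike.re ⟪(f : l2 V), (H f : l2 V)⟫_ℂ + t * ‖(f : l2 V)‖^2 := by
    intro f
    obtain ⟨s, hfs, -, hNf, -⟩ := hbig f f
    have h2 := hexp f f s hfs hfs hNf hNf
    have hns := hnormsq f s hfs
    set F : V → ℂ := fun x => (f : l2 V) x with hF
    have hre : RCLike.re ⟪(f : l2 V), (H f : l2 V)⟫_ℂ
        = (∑ x ∈ s, ∑ y ∈ s, E x y * (Complex.normSq (F x) - (conj (F x) * F y).re))
          + ∑ x ∈ s, 𝒱 x * Complex.normSq (F x) := by
      rw [h2, RCLike.re_to_complex, Complex.add_re, Complex.re_sum, Complex.re_sum]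
      congr 1
      · refine Finset.sum_congr rfl (fun x _ => ?_)
        rw [Complex.re_sum]
        refine Finset.sum_congr rfl (fun y _ => ?_)
        rw [hre0]
        congr 1
        rw [mul_sub, Complex.sub_re, hcz]
      · refine Finset.sum_congr rfl (fun x _ => ?_)
        rw [hre0, hcz]
    have hD : 0 ≤ ∑ x ∈ s, ∑ y ∈ s, E x y * (Complex.normSq (F x) - (conj (F x) * F y).re) := by
      set S1 := ∑ x ∈ s, ∑ y ∈ s, E x y * Complex.normSq (F x) with hS1
      set S2 := ∑ x ∈ s, ∑ y ∈ s, E x y * Complex.normSq (F y) with hS2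
      set S3 := ∑ x ∈ s, ∑ y ∈ s, E x y * (conj (F x) * F y).re with hS3
      have hswapR : S1 = S2 := by
        rw [hS1, hS2, Finset.sum_comm]
        exact Finset.sum_congr rfl (fun x _ => Finset.sum_congr rfl (fun y _ => by rw [hEsymm]))
      have hlhs : ∑ x ∈ s, ∑ y ∈ s, E x y * (Complex.normSq (F x) - (conj (F x) * F y).re)
          = S1 - S3 := by
        rw [hS1, hS3, ← Finset.sum_sub_distrib]
        refine Finset.sum_congr rfl (fun x _ => ?_)
        rw [← Finset.sum_sub_distrib]
        exact Finset.sum_congr rfl (fun y _ => by ring)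
      have hrhs : ∑ x ∈ s, ∑ y ∈ s, E x y * Complex.normSq (F x - F y)
          = S1 + S2 - 2 * S3 := by
        have e1 : ∀ x ∈ s, ∑ y ∈ s, E x y * Complex.normSq (F x - F y)
            = (∑ y ∈ s, E x y * Complex.normSq (F x))
              + (∑ y ∈ s, E x y * Complex.normSq (F y))
              - ∑ y ∈ s, 2 * (E x y * (conj (F x) * F y).re) := by
          intro x _
          rw [← Finset.sum_add_distrib, ← Finset.sum_sub_distrib]
          refine Finset.sum_congr rfl (fun y _ => ?_)
          rw [hsub]
          ring
        rw [Finset.sum_congr rfl e1, Finset.sum_sub_distrib, Finset.sum_add_distrib,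
          hS1, hS2, hS3, Finset.mul_sum]
        congr 1
        exact Finset.sum_congr rfl (fun x _ => by rw [Finset.mul_sum])
      have hpos : 0 ≤ ∑ x ∈ s, ∑ y ∈ s, E x y * Complex.normSq (F x - F y) :=
        Finset.sum_nonneg (fun x _ => Finset.sum_nonneg (fun y _ =>
          mul_nonneg (hEpos x y) (Complex.normSq_nonneg _)))
      rw [hlhs]
      rw [hrhs] at hpos
      linarith [hswapR, hpos]
    have hP : ∑ x ∈ s, Complex.normSq (F x) ≤ ∑ x ∈ s, (𝒱 x + t) * Complex.normSq (F x) := by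
      refine Finset.sum_le_sum (fun x _ => ?_)
      calc Complex.normSq (F x) = 1 * Complex.normSq (F x) := (one_mul _).symm
        _ ≤ (𝒱 x + t) * Complex.normSq (F x) :=
            mul_le_mul_of_nonneg_right (hVt x) (Complex.normSq_nonneg _)
    have hsplit : ∑ x ∈ s, (𝒱 x + t) * Complex.normSq (F x)
        = (∑ x ∈ s, 𝒱 x * Complex.normSq (F x)) + t * ∑ x ∈ s, Complex.normSq (F x) := by
      rw [Finset.mul_sum, ← Finset.sum_add_distrib]
      exact Finset.sum_congr rfl (fun x _ => by ring)
    rw [hre, hns]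
    linarith [hD, hP, hsplit]
  -- trivial kernel of the adjoint of the shifted operator
  have hker : ∀ u : l2 V,
      (∀ f : H.domain, ⟪u, (H f : l2 V)⟫_ℂ + (t : ℂ) * ⟪u, (f : l2 V)⟫_ℂ = 0) → u = 0 := by
    intro u hu
    refine max_principle u N (fun x => 𝒱 x + t) E hEpos hVt (fun x => ?_)
    set δ : l2 V := lp.single 2 x 1 with hδ
    have hδx : δ x = 1 := lp.single_apply_self 2 x 1
    have hδne : ∀ j, j ≠ x → δ j = 0 := fun j hj => lp.single_apply_ne 2 x 1 hj
    have hδCc : δ ∈ Cc V := by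
      show (Function.support (⇑δ : V → ℂ)).Finite
      refine Set.Finite.subset (Set.finite_singleton x) ?_
      intro j hj
      rw [Function.mem_support] at hj
      by_contra hjx
      exact hj (hδne j (by simpa using hjx))
    set fδ : H.domain := ⟨δ, by rw [hdom]; exact hδCc⟩ with hfδ
    have hfδcoe : (fδ : l2 V) = δ := rfl
    have hxN : x ∉ N x := by rw [hN]; simp [hEloop x]
    have hvx : (H fδ : l2 V) x = (∑ y ∈ N x, (E x y : ℂ)) + (𝒱 x : ℂ) := by
      rw [hval fδ x, hfδcoe, hδx, mul_one]
      congr 1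
      refine Finset.sum_congr rfl (fun y hy => ?_)
      have hyx : y ≠ x := fun h => hxN (h ▸ hy)
      rw [hδne y hyx, sub_zero, mul_one]
    have hvz : ∀ z ∈ N x, (H fδ : l2 V) z = -(E x z : ℂ) := by
      intro z hz
      have hzx : z ≠ x := fun h => hxN (h ▸ hz)
      have hxNz : x ∈ N z := by rw [hN, hEsymm]; exact (hN x z).mp hz
      rw [hval fδ z, hfδcoe, hδne z hzx, mul_zero, add_zero]
      rw [Finset.sum_eq_single_of_mem x hxNz ?_]
      · rw [hδx, hEsymm z x]; ring
      · intro y _ hyx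
        rw [hδne y hyx]; simp
    have hsuppδ : ∀ z, (H fδ : l2 V) z ≠ 0 → z ∈ insert x (N x) := by
      intro z hz
      rcases hsupp fδ z hz with h | ⟨y, hEy, hy⟩
      · rw [hfδcoe] at h
        have hzx : z = x := by by_contra hzx; exact h (hδne z hzx)
        exact Finset.mem_insert.mpr (Or.inl hzx)
      · rw [hfδcoe] at hy
        have hyx : y = x := by by_contra hyx; exact hy (hδne y hyx)
        rw [hyx] at hEy
        exact Finset.mem_insert.mpr (Or.inr ((hN x z).mpr (by rw [hEsymm]; exact hEy)))
    have h1 : ⟪u, (H fδ : l2 V)⟫_ℂ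
        = conj (u x) * ((∑ y ∈ N x, (E x y : ℂ)) + (𝒱 x : ℂ))
          + ∑ z ∈ N x, conj (u z) * (-(E x z : ℂ)) := by
      rw [inner_eq_sum _ _ (insert x (N x)) hsuppδ, Finset.sum_insert hxN, hvx]
      congr 1
      exact Finset.sum_congr rfl (fun z hz => by rw [hvz z hz])
    have h2 : ⟪u, (fδ : l2 V)⟫_ℂ = conj (u x) := by
      rw [hfδcoe, inner_eq_sum u δ {x}
        (fun j hj => Finset.mem_singleton.mpr (by by_contra hjx; exact hj (hδne j hjx))),
        Finset.sum_singleton, hδx, mul_one]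
    have heq := hu fδ
    rw [h1, h2] at heq
    have heqc := congrArg conj heq
    simp only [map_add, map_mul, map_sum, map_neg, map_zero, Complex.conj_conj,
      Complex.conj_ofReal] at heqc
    have hsum2 : ∑ z ∈ N x, u z * -(E x z : ℂ) = -∑ y ∈ N x, (E x y : ℂ) * u y := by
      rw [← Finset.sum_neg_distrib]
      exact Finset.sum_congr rfl (fun y _ => by ring)
    rw [hsum2] at heqc
    push_cast
    linear_combination heqc
  -- density of the domain
  have hsingle : ∀ (i : V) (a : ℂ), lp.single 2 i a ∈ Cc V := by
    intro i a
    show (Function.support (⇑(lp.single 2 i a : l2 V) : V → ℂ)).Finite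
    refine Set.Finite.subset (Set.finite_singleton i) ?_
    intro j hj
    rw [Function.mem_support] at hj
    rw [Set.mem_singleton_iff]
    by_contra hji
    exact hj (lp.single_apply_ne (E := fun _ : V => ℂ) 2 i a hji)
  have hdense : Dense ((H.domain : Submodule ℂ (l2 V)) : Set (l2 V)) := by
    rw [hdom]
    intro φ
    have hs := lp.hasSum_single (E := fun _ : V => ℂ) (p := 2) (by norm_num) φ
    refine mem_closure_of_tendsto hs (Filter.Eventually.of_forall (fun s => ?_))
    exact Submodule.sum_mem _ (fun i _ => hsingle i (φ i))
  exact esa_criterion H hdense hsym t hbound hker
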